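/- Let g : ℝⁿ → ℝ be the group Lasso norm ‖x‖_{1,2} = Σ_{J∈𝒥} ‖x_J‖ for a partition 𝒥 of {1,…,n}, let x̄ ∈ ℝⁿ and v̄ ∈ ∂‖·‖_{1,2}(x̄). Then the conjugate g* = δ_{𝔹_{∞,2}} (indicator of {v : ‖v_J‖ ≤ 1 for all J}) satisfies the quadratic growth condition at v̄ for x̄: with κ = ½ min{‖x̄_J‖ : x̄_J ≠ 0} > 0 (taking κ arbitrary if all x̄_J = 0), for every v with ‖v_J‖ ≤ 1 for all J one has 0 ≥ ⟨x̄, v − v̄⟩ + κ Σ_{J : x̄_J ≠ 0} ‖v_J − v̄_J‖². -/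

import Mathlib

open Filter Topology Metric Set
open scoped RealInnerProductSpace NNReal ENNReal

noncomputable section

/-- Bouligand (contingent) tangent cone. -/
def tanCone {G : Type*} [AddCommGroup G] [Module ℝ G] [TopologicalSpace G]
    (s : Set G) (x : G) : Set G :=
  {w | ∃ (t : ℕ → ℝ) (wk : ℕ → G), (∀ n, 0 < t n) ∧
    Tendsto t atTop (𝓝 0) ∧ Tendsto wk atTop (𝓝 w) ∧ ∀ n, x + t n • wk n ∈ s}

variable {E F : Type*} [NormedAddCommGroup E] [InnerProductSpace ℝ E]
  [NormedAddCommGroup F] [InnerProductSpace ℝ F]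

/-- Graph of a set-valued mapping. -/
def gph (S : E → Set F) : Set (E × F) := {p | p.2 ∈ S p.1}

/-- Graphical derivative. -/
def gder (S : E → Set F) (x : E) (y : F) (w : E) : Set F :=
  {z | (w, z) ∈ tanCone (gph S) (x, y)}

/-- Local closedness of the graph around a point. -/
def LocallyClosedGraph (S : E → Set F) (x : E) (y : F) : Prop :=
  ∃ U ∈ 𝓝 ((x, y) : E × F), IsClosed (U ∩ gph S)

/-- Metric subregularity of a set-valued mapping at `x` for `y`. -/
def MetrSubreg (S : E → Set F) (x : E) (y : F) : Prop :=
  ∃ κ : ℝ≥0, ∃ ε : ℝ, 0 < ε ∧ ∀ x' ∈ ball x ε,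
    EMetric.infEdist x' {u | y ∈ S u} ≤ (κ : ℝ≥0∞) * EMetric.infEdist y (S x')

/-- Convex subdifferential of an extended-real-valued function. -/
def subdiff (φ : E → EReal) (x : E) : Set E :=
  {v | ∀ u, φ x + ((⟪v, u - x⟫ : ℝ) : EReal) ≤ φ u}

/-- Properness. -/
def ProperFn (φ : E → EReal) : Prop := (∀ x, φ x ≠ ⊥) ∧ ∃ x, φ x ≠ ⊤

/-- Convexity via the epigraph. -/
def ConvexFn (φ : E → EReal) : Prop := Convex ℝ {p : E × ℝ | φ p.1 ≤ (p.2 : EReal)}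

/-- Fenchel conjugate. -/
def conjFn (φ : E → EReal) (v : E) : EReal := ⨆ x, ((⟪v, x⟫ : ℝ) : EReal) - φ x

/-- Second subderivative. -/
def secondSubderiv (φ : E → EReal) (x v w : E) : EReal :=
  Filter.liminf (fun p : ℝ × E =>
    (((2 / p.1 ^ 2 : ℝ)) : EReal) *
      (φ (x + p.1 • p.2) - φ x - ((p.1 * ⟪v, p.2⟫ : ℝ) : EReal)))
    ((𝓝[>] (0 : ℝ)) ×ˢ 𝓝 w)

/-- Quadratic growth condition at `x` for `v`. -/
def QuadGrowth (φ : E → EReal) (x v : E) : Prop :=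
  ∃ c : ℝ, 0 < c ∧ ∃ ε : ℝ, 0 < ε ∧ ∀ u ∈ ball x ε,
    φ x + ((⟪v, u - x⟫ + c / 2 * (infDist u {u' | v ∈ subdiff φ u'}) ^ 2 : ℝ) : EReal) ≤ φ u


/-- Triangle inequality for Euclidean-like sums over a finset. -/
lemma sqrt_sum_add_sq_le' {α : Type*} (s : Finset α) (a b : α → ℝ) :
    Real.sqrt (∑ i ∈ s, (a i + b i)^2) ≤
      Real.sqrt (∑ i ∈ s, (a i)^2) + Real.sqrt (∑ i ∈ s, (b i)^2) := by
  have hA : (0:ℝ) ≤ ∑ i ∈ s, (a i)^2 := Finset.sum_nonneg fun i _ => sq_nonneg _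
  have hB : (0:ℝ) ≤ ∑ i ∈ s, (b i)^2 := Finset.sum_nonneg fun i _ => sq_nonneg _
  have hcs := Real.sum_mul_le_sqrt_mul_sqrt s a b
  rw [← Real.sqrt_sq (by positivity :
    (0:ℝ) ≤ Real.sqrt (∑ i ∈ s, (a i)^2) + Real.sqrt (∑ i ∈ s, (b i)^2))]
  apply Real.sqrt_le_sqrt
  have h1 : Real.sqrt (∑ i ∈ s, (a i)^2) ^ 2 = ∑ i ∈ s, (a i)^2 := Real.sq_sqrt hA
  have h2 : Real.sqrt (∑ i ∈ s, (b i)^2) ^ 2 = ∑ i ∈ s, (b i)^2 := Real.sq_sqrt hB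
  have hexp : ∑ i ∈ s, (a i + b i)^2
      = ∑ i ∈ s, (a i)^2 + 2 * (∑ i ∈ s, a i * b i) + ∑ i ∈ s, (b i)^2 := by
    rw [Finset.mul_sum, ← Finset.sum_add_distrib, ← Finset.sum_add_distrib]
    exact Finset.sum_congr rfl fun i _ => by ring
  nlinarith [hcs]


/-- quadratic growth of the conjugate of the group Lasso norm. -/
theorem stmt17 {n : ℕ} {ι : Type*} [Fintype ι] [DecidableEq ι] (grp : Fin n → ι)
    (xb vb : Fin n → ℝ)
    (gnorm : (Fin n → ℝ) → ι → ℝ)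
    (hgnorm : ∀ x J, gnorm x J =
      Real.sqrt (∑ i ∈ Finset.univ.filter (fun i => grp i = J), x i ^ 2))
    (g : (Fin n → ℝ) → ℝ) (hg : ∀ x, g x = ∑ J, gnorm x J)
    (hv : ∀ u : Fin n → ℝ, g xb + ∑ i, vb i * (u i - xb i) ≤ g u)
    (S : Finset ι) (hS : S = Finset.univ.filter (fun J => gnorm xb J ≠ 0))
    (κ : ℝ) (hκ : ∀ hne : S.Nonempty, κ = (S.inf' hne (fun J => gnorm xb J)) / 2) :
    ∀ v : Fin n → ℝ, (∀ J, gnorm v J ≤ 1) →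
      (∑ i, xb i * (v i - vb i)) +
        κ * ∑ J ∈ S, (∑ i ∈ Finset.univ.filter (fun i => grp i = J), (v i - vb i) ^ 2)
        ≤ 0 := by
  intro v hvle
  classical
  -- Step 1: groupwise subgradient inequality
  have hsub : ∀ (J : ι) (w : Fin n → ℝ), (∀ i, grp i ≠ J → w i = 0) →
      ∑ i ∈ Finset.univ.filter (fun i => grp i = J), vb i * w i
        ≤ gnorm (xb + w) J - gnorm xb J := by
    intro J w hw
    have h1 := hv (xb + w)
    rw [hg, hg] at h1
    have h3 : ∑ i, vb i * ((xb + w) i - xb i)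
        = ∑ i ∈ Finset.univ.filter (fun i => grp i = J), vb i * w i := by
      have hc : ∀ i ∈ Finset.univ, vb i * ((xb + w) i - xb i) = vb i * w i := by
        intro i _; simp
      rw [Finset.sum_congr rfl hc]
      exact (Finset.sum_subset (Finset.subset_univ _) (fun i _ hi => by
        have hgi : grp i ≠ J := by simpa using hi
        rw [hw i hgi, mul_zero])).symm
    have h4 : ∑ J', (gnorm (xb + w) J' - gnorm xb J') = gnorm (xb + w) J - gnorm xb J := by
      apply Finset.sum_eq_single_of_mem J (Finset.mem_univ J)
      intro J' _ hne
      have heq : gnorm (xb + w) J' = gnorm xb J' := by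
        rw [hgnorm, hgnorm]
        congr 1
        refine Finset.sum_congr rfl fun i hi => ?_
        have hgi : grp i = J' := (Finset.mem_filter.1 hi).2
        rw [Pi.add_apply, hw i (by rw [hgi]; exact hne), add_zero]
      rw [heq]; ring
    have h5 : ∑ J', (gnorm (xb + w) J' - gnorm xb J')
        = (∑ J', gnorm (xb + w) J') - ∑ J', gnorm xb J' := Finset.sum_sub_distrib _ _
    rw [h3] at h1
    linarith
  -- Step 2: per-group key inequality
  have hkey : ∀ J ∈ S,
      (∑ i ∈ Finset.univ.filter (fun i => grp i = J), xb i * (v i - vb i))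
        + κ * ∑ i ∈ Finset.univ.filter (fun i => grp i = J), (v i - vb i)^2 ≤ 0 := by
    intro J hJ
    have hne : S.Nonempty := ⟨J, hJ⟩
    have hκeq := hκ hne
    have hNne : gnorm xb J ≠ 0 := by
      rw [hS] at hJ; exact (Finset.mem_filter.1 hJ).2
    have hN0 : 0 ≤ gnorm xb J := by rw [hgnorm]; exact Real.sqrt_nonneg _
    have hNpos : 0 < gnorm xb J := lt_of_le_of_ne hN0 (Ne.symm hNne)
    set N := gnorm xb J with hNdef
    have hsqx : ∑ i ∈ Finset.univ.filter (fun i => grp i = J), xb i ^ 2 = N ^ 2 := by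
      rw [hNdef, hgnorm, Real.sq_sqrt (Finset.sum_nonneg fun i _ => sq_nonneg _)]
    -- A = ∑ vb * xb = N
    have hA : ∑ i ∈ Finset.univ.filter (fun i => grp i = J), vb i * xb i = N := by
      have h1 := hsub J (fun i => if grp i = J then xb i else 0) (fun i hi => if_neg hi)
      have h2 := hsub J (fun i => if grp i = J then -xb i else 0) (fun i hi => if_neg hi)
      have e1 : ∑ i ∈ Finset.univ.filter (fun i => grp i = J),
          vb i * (if grp i = J then xb i else 0)
          = ∑ i ∈ Finset.univ.filter (fun i => grp i = J), vb i * xb i :=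
        Finset.sum_congr rfl fun i hi => by rw [if_pos (Finset.mem_filter.1 hi).2]
      have e2 : ∑ i ∈ Finset.univ.filter (fun i => grp i = J),
          vb i * (if grp i = J then -xb i else 0)
          = -∑ i ∈ Finset.univ.filter (fun i => grp i = J), vb i * xb i := by
        rw [← Finset.sum_neg_distrib]
        exact Finset.sum_congr rfl fun i hi => by
          rw [if_pos (Finset.mem_filter.1 hi).2]; ring
      have g1 : gnorm (xb + fun i => if grp i = J then xb i else 0) J = 2 * N := by
        rw [hgnorm]
        have : ∑ i ∈ Finset.univ.filter (fun i => grp i = J),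
            ((xb + fun i => if grp i = J then xb i else 0) i) ^ 2 = (2 * N) ^ 2 := by
          rw [show ((2:ℝ) * N)^2 = 4 * N^2 by ring, ← hsqx, Finset.mul_sum]
          exact Finset.sum_congr rfl fun i hi => by
            rw [Pi.add_apply, if_pos (Finset.mem_filter.1 hi).2]; ring
        rw [this, Real.sqrt_sq (by positivity)]
      have g2 : gnorm (xb + fun i => if grp i = J then -xb i else 0) J = 0 := by
        rw [hgnorm]
        have : ∑ i ∈ Finset.univ.filter (fun i => grp i = J),
            ((xb + fun i => if grp i = J then -xb i else 0) i) ^ 2 = 0 := by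
          refine Finset.sum_eq_zero fun i hi => by
            rw [Pi.add_apply, if_pos (Finset.mem_filter.1 hi).2]; ring
        rw [this, Real.sqrt_zero]
      rw [e1, g1] at h1
      rw [e2, g2] at h2
      linarith
  -- B = ∑ vb² ≤ 1
    have hB : ∑ i ∈ Finset.univ.filter (fun i => grp i = J), vb i ^ 2 ≤ 1 := by
      set B := ∑ i ∈ Finset.univ.filter (fun i => grp i = J), vb i ^ 2 with hBdef
      have hB0 : 0 ≤ B := Finset.sum_nonneg fun i _ => sq_nonneg _
      have h1 := hsub J (fun i => if grp i = J then vb i else 0) (fun i hi => if_neg hi)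
      have e1 : ∑ i ∈ Finset.univ.filter (fun i => grp i = J),
          vb i * (if grp i = J then vb i else 0) = B :=
        Finset.sum_congr rfl fun i hi => by
          rw [if_pos (Finset.mem_filter.1 hi).2]; ring
      have g1 : gnorm (xb + fun i => if grp i = J then vb i else 0) J ≤ N + Real.sqrt B := by
        rw [hgnorm]
        have e2 : ∑ i ∈ Finset.univ.filter (fun i => grp i = J),
            ((xb + fun i => if grp i = J then vb i else 0) i) ^ 2
            = ∑ i ∈ Finset.univ.filter (fun i => grp i = J), (xb i + vb i) ^ 2 :=
          Finset.sum_congr rfl fun i hi => by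
            rw [Pi.add_apply, if_pos (Finset.mem_filter.1 hi).2]
        rw [e2]
        have := sqrt_sum_add_sq_le' (Finset.univ.filter (fun i => grp i = J)) xb vb
        have hNs : Real.sqrt (∑ i ∈ Finset.univ.filter (fun i => grp i = J), xb i ^ 2) = N := by
          rw [hsqx, Real.sqrt_sq hN0]
        rw [hNs] at this
        exact this
      rw [e1] at h1
      have hBs : B ≤ Real.sqrt B := by linarith
      nlinarith [Real.sq_sqrt hB0, Real.sqrt_nonneg B]
    -- pointwise: xb i = N * vb i on the group, and ∑ vb² = 1
    have hexp : ∑ i ∈ Finset.univ.filter (fun i => grp i = J), (N * vb i - xb i) ^ 2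
        = N^2 * (∑ i ∈ Finset.univ.filter (fun i => grp i = J), vb i ^ 2)
          - 2 * N * (∑ i ∈ Finset.univ.filter (fun i => grp i = J), vb i * xb i)
          + ∑ i ∈ Finset.univ.filter (fun i => grp i = J), xb i ^ 2 := by
      rw [Finset.mul_sum, Finset.mul_sum, ← Finset.sum_sub_distrib, ← Finset.sum_add_distrib]
      exact Finset.sum_congr rfl fun i _ => by ring
    have hsum0 : ∑ i ∈ Finset.univ.filter (fun i => grp i = J), (N * vb i - xb i) ^ 2 = 0 := by
      refine le_antisymm ?_ (Finset.sum_nonneg fun i _ => sq_nonneg _)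
      rw [hexp, hA, hsqx]
      nlinarith [mul_nonneg (sq_nonneg N) (sub_nonneg.mpr hB)]
    have h0 := hsum0
    rw [hexp, hA, hsqx] at h0
    have hN2 : (0:ℝ) < N^2 := by positivity
    have hB1 : ∑ i ∈ Finset.univ.filter (fun i => grp i = J), vb i ^ 2 = 1 := by
      have hz : N^2 * ((∑ i ∈ Finset.univ.filter (fun i => grp i = J), vb i ^ 2) - 1) = 0 := by
        ring_nf; ring_nf at h0; linarith
      rcases mul_eq_zero.mp hz with h | h
      · exact absurd h hN2.ne'
      · linarith
    have hpt : ∀ i ∈ Finset.univ.filter (fun i => grp i = J), xb i = N * vb i := by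
      intro i hi
      have := (Finset.sum_eq_zero_iff_of_nonneg (fun i _ => sq_nonneg (N * vb i - xb i))).mp
        hsum0 i hi
      have := pow_eq_zero_iff (n := 2) (by norm_num) |>.mp this
      linarith [sub_eq_zero.mp this]
    -- final per-group computation
    set C := ∑ i ∈ Finset.univ.filter (fun i => grp i = J), vb i * v i with hCdef
    set D := ∑ i ∈ Finset.univ.filter (fun i => grp i = J), v i ^ 2 with hDdef
    have hD0 : 0 ≤ D := Finset.sum_nonneg fun i _ => sq_nonneg _
    have hD1 : D ≤ 1 := by
      have hs := hvle J
      rw [hgnorm] at hs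
      nlinarith [Real.sq_sqrt hD0, Real.sqrt_nonneg D]
    have hxv : ∑ i ∈ Finset.univ.filter (fun i => grp i = J), xb i * (v i - vb i)
        = N * (C - 1) := by
      have hc : ∀ i ∈ Finset.univ.filter (fun i => grp i = J),
          xb i * (v i - vb i) = N * (vb i * v i) - N * vb i ^ 2 := fun i hi => by
        rw [hpt i hi]; ring
      rw [Finset.sum_congr rfl hc, Finset.sum_sub_distrib, ← Finset.mul_sum, ← Finset.mul_sum,
        hB1, ← hCdef]
      ring
    have hsq2 : ∑ i ∈ Finset.univ.filter (fun i => grp i = J), (v i - vb i) ^ 2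
        = D - 2 * C + 1 := by
      have hc : ∀ i ∈ Finset.univ.filter (fun i => grp i = J),
          (v i - vb i) ^ 2 = v i ^ 2 - 2 * (vb i * v i) + vb i ^ 2 := fun i _ => by ring
      rw [Finset.sum_congr rfl hc, Finset.sum_add_distrib, Finset.sum_sub_distrib, hB1,
        ← Finset.mul_sum, ← hCdef, ← hDdef]
    have hκle : κ ≤ N / 2 := by
      rw [hκeq]
      have := Finset.inf'_le (fun J => gnorm xb J) hJ
      linarith [this]
    have hnn : 0 ≤ D - 2 * C + 1 := by
      rw [← hsq2]; exact Finset.sum_nonneg fun i _ => sq_nonneg _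
    rw [hxv, hsq2]
    nlinarith [mul_le_mul_of_nonneg_right hκle hnn,
      mul_nonneg hNpos.le (sub_nonneg.mpr hD1)]
  -- Step 3: global assembly
  have hfib : ∑ i, xb i * (v i - vb i)
      = ∑ J, ∑ i ∈ Finset.univ.filter (fun i => grp i = J), xb i * (v i - vb i) :=
    (Finset.sum_fiberwise Finset.univ grp (fun i => xb i * (v i - vb i))).symm
  have hzeroJ : ∀ J ∈ Finset.univ, J ∉ S →
      ∑ i ∈ Finset.univ.filter (fun i => grp i = J), xb i * (v i - vb i) = 0 := by
    intro J _ hJ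
    have h0 : gnorm xb J = 0 := by
      rw [hS] at hJ
      simpa using hJ
    rw [hgnorm] at h0
    have hsum : ∑ i ∈ Finset.univ.filter (fun i => grp i = J), xb i ^ 2 = 0 := by
      have := Real.sqrt_eq_zero (Finset.sum_nonneg fun i _ => sq_nonneg _) |>.mp h0
      exact this
    refine Finset.sum_eq_zero fun i hi => ?_
    have := (Finset.sum_eq_zero_iff_of_nonneg (fun i _ => sq_nonneg (xb i))).mp hsum i hi
    have hx0 : xb i = 0 := by
      have := pow_eq_zero_iff (n := 2) (by norm_num) |>.mp this
      exact this
    rw [hx0, zero_mul]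
  have hsum_eq : ∑ J, ∑ i ∈ Finset.univ.filter (fun i => grp i = J), xb i * (v i - vb i)
      = ∑ J ∈ S, ∑ i ∈ Finset.univ.filter (fun i => grp i = J), xb i * (v i - vb i) :=
    (Finset.sum_subset (Finset.subset_univ S) hzeroJ).symm
  rw [hfib, hsum_eq, Finset.mul_sum, ← Finset.sum_add_distrib]
  exact Finset.sum_nonpos fun J hJ => hkey J hJ


end
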